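/- Let k ≥ 5 and s > 101k^3 be integers and ε = 1/(100k). For each g = 0, 1, ..., k-2: Σ_{c=1}^{k-g-1} Σ_{d=c+g}^{k-1} w_{c,d} · C(k,c) · k^{2d-c}/(d-c)! ≤ (1 + 2/k) · k^{k+2g}/(s^g · g!) · ε, where w_{c,d} ≤ (1+1/k) · ε^{k-d}/s^{d-c} · (k-c)!/(k-d)! (use this upper bound for w_{c,d}). -/

import Mathlib

open Finset

-- difference of powers
lemma L1 (n : ℕ) {x y : ℝ} (hy : 0 ≤ y) (hxy : y ≤ x) :
    x ^ (n+1) - y ^ (n+1) ≤ (n+1) * (x - y) * x ^ n := by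
  induction n with
  | zero => simp
  | succ n ih =>
      have hpow : y ^ (n+1) ≤ x ^ (n+1) := pow_le_pow_left₀ hy hxy _
      have hx : 0 ≤ x := hy.trans hxy
      have hint1 : x * (x^(n+1) - y^(n+1)) ≤ (↑n+1) * (x - y) * x^(n+1) := by
        calc x * (x^(n+1) - y^(n+1)) ≤ x * ((↑n+1)*(x-y)*x^n) :=
              mul_le_mul_of_nonneg_left ih hx
          _ = (↑n+1)*(x-y)*x^(n+1) := by ring
      have hint2 : (x-y)*y^(n+1) ≤ (x-y)*x^(n+1) :=
        mul_le_mul_of_nonneg_left hpow (sub_nonneg.2 hxy)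
      have h1 : x ^ (n+1+1) - y ^ (n+1+1) = x * (x^(n+1) - y^(n+1)) + (x - y) * y^(n+1) := by
        ring
      push_cast
      rw [h1]
      nlinarith [hint1, hint2]

-- Bernoulli-type inverse bound
lemma L3 (m : ℕ) {t : ℝ} (ht : 0 ≤ t) (hmt : (m:ℝ) * t < 1) :
    (1 + t) ^ m ≤ (1 - (m:ℝ) * t)⁻¹ := by
  have h1 : (0:ℝ) < 1 - (m:ℝ)*t := by linarith
  rcases Nat.eq_zero_or_pos m with h | h
  · subst h; simp
  · have hm1 : (1:ℝ) ≤ m := by exact_mod_cast h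
    have ht1 : t < 1 := by nlinarith
    have hb : 1 - (m:ℝ)*t ≤ (1-t)^m := by
      have := one_add_mul_le_pow (a := -t) (by linarith) m
      rw [← sub_eq_add_neg] at this; linarith
    have key : (1+t)^m * (1 - (m:ℝ)*t) ≤ 1 := by
      calc (1+t)^m * (1 - (m:ℝ)*t) ≤ (1+t)^m * (1-t)^m :=
            mul_le_mul_of_nonneg_left hb (pow_nonneg (by linarith) m)
        _ = ((1+t)*(1-t))^m := (mul_pow _ _ _).symm
        _ ≤ 1 := pow_le_one₀ (by nlinarith) (by nlinarith)
    rw [inv_eq_one_div, le_div_iff₀ h1]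
    exact key

-- restricted binomial sum
lemma L2 (n : ℕ) (hn : 2 ≤ n) {x y : ℝ} (hx : 0 ≤ x) (hy : 0 ≤ y) :
    ∑ c ∈ Icc 1 (n-1), (n.choose c : ℝ) * y ^ c * x ^ (n - c)
      ≤ (x + y) ^ n - x ^ n - y ^ n := by
  have hexp : (x + y) ^ n = ∑ c ∈ range (n+1), y ^ c * x ^ (n - c) * (n.choose c : ℝ) :=
    add_pow y x n ▸ by rw [add_comm y x]
  have hsub : insert 0 (insert n (Icc 1 (n-1))) ⊆ range (n+1) := by
    intro i hi
    simp only [mem_insert, mem_Icc] at hi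
    simp only [mem_range]
    omega
  have hn0 : n ∉ Icc 1 (n-1) := by simp; omega
  have h0 : 0 ∉ insert n (Icc 1 (n-1)) := by simp; omega
  calc ∑ c ∈ Icc 1 (n-1), (n.choose c : ℝ) * y ^ c * x ^ (n - c)
      = (∑ c ∈ insert 0 (insert n (Icc 1 (n-1))), y ^ c * x ^ (n - c) * (n.choose c : ℝ))
          - x ^ n - y ^ n := by
        rw [Finset.sum_insert h0, Finset.sum_insert hn0]
        have h00 : y ^ 0 * x ^ (n - 0) * (n.choose 0 : ℝ) = x ^ n := by simp
        have hnn : y ^ n * x ^ (n - n) * (n.choose n : ℝ) = y ^ n := by simp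
        rw [h00, hnn]
        have hS : (∑ c ∈ Icc 1 (n-1), y ^ c * x ^ (n - c) * (n.choose c : ℝ))
            = ∑ c ∈ Icc 1 (n-1), (n.choose c : ℝ) * y ^ c * x ^ (n - c) :=
          Finset.sum_congr rfl (fun c _ => by ring)
        rw [hS]
        ring
    _ ≤ (∑ c ∈ range (n+1), y ^ c * x ^ (n - c) * (n.choose c : ℝ)) - x ^ n - y ^ n := by
        have := Finset.sum_le_sum_of_subset_of_nonneg hsub
          (f := fun c => y ^ c * x ^ (n - c) * (n.choose c : ℝ))
          (fun i _ _ => by positivity)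
        linarith
    _ = (x + y) ^ n - x ^ n - y ^ n := by rw [hexp]

-- factorial identity
lemma Lfact (k c j : ℕ) (h : c + j ≤ k) :
    ((k-c).factorial : ℝ) / ((k-(c+j)).factorial) * (k.choose c) / (j.factorial)
      = (k.choose j : ℝ) * ((k-j).choose c) := by
  rw [Nat.cast_choose ℝ (show c ≤ k by omega), Nat.cast_choose ℝ (show j ≤ k by omega),
      Nat.cast_choose ℝ (show c ≤ k - j by omega)]
  have e1 : k - (c+j) = k - j - c := by omega
  have e2 : k - c - j = k - j - c := by omega
  rw [e1]
  have f1 : ((k-c).factorial : ℝ) ≠ 0 := Nat.cast_ne_zero.2 (Nat.factorial_ne_zero _)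
  have f2 : ((k-j-c).factorial : ℝ) ≠ 0 := Nat.cast_ne_zero.2 (Nat.factorial_ne_zero _)
  have f3 : (c.factorial : ℝ) ≠ 0 := Nat.cast_ne_zero.2 (Nat.factorial_ne_zero _)
  have f4 : (j.factorial : ℝ) ≠ 0 := Nat.cast_ne_zero.2 (Nat.factorial_ne_zero _)
  have f5 : ((k-j).factorial : ℝ) ≠ 0 := Nat.cast_ne_zero.2 (Nat.factorial_ne_zero _)
  field_simp

-- reindexing
lemma Lreindex (k g : ℕ) (f : ℕ → ℕ → ℝ) :
    ∑ c ∈ Icc 1 (k-g-1), ∑ d ∈ Icc (c+g) (k-1), f c d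
      = ∑ j ∈ Icc g (k-2), ∑ c ∈ Icc 1 (k-1-j), f c (c+j) := by
  rw [Finset.sum_sigma', Finset.sum_sigma']
  refine Finset.sum_nbij' (i := fun p => (⟨p.2 - p.1, p.1⟩ : Σ _ : ℕ, ℕ))
    (j := fun p => (⟨p.2, p.2 + p.1⟩ : Σ _ : ℕ, ℕ)) ?_ ?_ ?_ ?_ ?_
  · rintro ⟨c, d⟩ hm
    simp only [mem_sigma, mem_Icc] at hm ⊢
    omega
  · rintro ⟨j, c⟩ hm
    simp only [mem_sigma, mem_Icc] at hm ⊢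
    omega
  · rintro ⟨c, d⟩ hm
    simp only [mem_sigma, mem_Icc] at hm
    simp only [show c + (d - c) = d from by omega]
  · rintro ⟨j, c⟩ hm
    simp only [mem_sigma, mem_Icc] at hm
    simp only [show c + j - c = j from by omega]
  · rintro ⟨c, d⟩ hm
    simp only [mem_sigma, mem_Icc] at hm
    have : c + (d - c) = d := by omega
    simp only [this]

lemma Lstep3 (g m : ℕ) {r : ℝ} (hr0 : 0 ≤ r) (hr1 : r < 1) :
    ∑ j ∈ Icc g m, r^(j-g) ≤ (1-r)⁻¹ := by
  have h1 : Icc g m = Ico g (m+1) := by rw [Finset.Ico_add_one_right_eq_Icc]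
  rw [h1, Finset.sum_Ico_eq_sum_range]
  calc ∑ i ∈ range (m+1-g), r^(g+i-g) = ∑ i ∈ range (m+1-g), r^i :=
        Finset.sum_congr rfl (fun i _ => by rw [show g+i-g = i from by omega])
    _ ≤ r^0/(1-r) := by
        rw [range_eq_Ico]
        exact geom_sum_Ico_le_of_lt_one hr0 hr1
    _ = (1-r)⁻¹ := by rw [pow_zero, one_div]

lemma Lstep2 (k s g j : ℕ) (hs0 : 0 < s) (hk0 : 0 < k) (hgj : g ≤ j) :
    (k:ℝ)^(k+2*j)/((s:ℝ)^j * (Nat.factorial j : ℝ)) ≤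
      ((k:ℝ)^(k+2*g)/((s:ℝ)^g*(Nat.factorial g : ℝ))) * ((k:ℝ)^2/(s:ℝ))^(j-g) := by
  have hS0 : (0:ℝ) < s := by exact_mod_cast hs0
  have hK0 : (0:ℝ) < k := by exact_mod_cast hk0
  have h1 : (Nat.factorial g : ℝ) ≤ (Nat.factorial j : ℝ) := by
    exact_mod_cast Nat.factorial_le hgj
  have hg0 : (0:ℝ) < Nat.factorial g := by exact_mod_cast Nat.factorial_pos g
  have e1 : (k:ℝ)^(k+2*j) = (k:ℝ)^(k+2*g) * (k:ℝ)^(2*(j-g)) := by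
    rw [← pow_add]; congr 1; omega
  have e2 : (s:ℝ)^j = (s:ℝ)^g * (s:ℝ)^(j-g) := by
    rw [← pow_add]; congr 1; omega
  have e3 : ((k:ℝ)^2/(s:ℝ))^(j-g) = (k:ℝ)^(2*(j-g)) / (s:ℝ)^(j-g) := by
    rw [div_pow, ← pow_mul]
  rw [e1, e2, e3]
  calc (k:ℝ)^(k+2*g) * (k:ℝ)^(2*(j-g)) / ((s:ℝ)^g * (s:ℝ)^(j-g) * (Nat.factorial j : ℝ))
      ≤ (k:ℝ)^(k+2*g) * (k:ℝ)^(2*(j-g)) / ((s:ℝ)^g * (s:ℝ)^(j-g) * (Nat.factorial g : ℝ)) := by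
        gcongr <;> first | exact h1 | positivity
    _ = (k:ℝ)^(k+2*g)/((s:ℝ)^g*(Nat.factorial g : ℝ)) * ((k:ℝ)^(2*(j-g)) / (s:ℝ)^(j-g)) := by
        ring

lemma Lconst {K r : ℝ} (hK : 5 ≤ K) (hr0 : 0 ≤ r) (hr2 : r ≤ 1/(101*K)) :
    (1 + 1/K) * (1 - 1/(100*K))⁻¹ * (1 - r)⁻¹ ≤ 1 + 2/K := by
  have hK0 : (0:ℝ) < K := by linarith
  have h100 : (0:ℝ) < 1 - 1/(100*K) := by
    have : 1/(100*K) ≤ 1/500 := by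
      rw [div_le_div_iff₀ (by positivity) (by norm_num)]; linarith
    linarith
  have h101 : (0:ℝ) < 1 - 1/(101*K) := by
    have : 1/(101*K) ≤ 1/505 := by
      rw [div_le_div_iff₀ (by positivity) (by norm_num)]; linarith
    linarith
  have hr1 : (0:ℝ) < 1 - r := by
    have : r ≤ 1/505 := le_trans hr2 (by rw [div_le_div_iff₀ (by positivity) (by norm_num)]; linarith)
    linarith
  have hmono : (1 - r)⁻¹ ≤ (1 - 1/(101*K))⁻¹ := by
    apply inv_anti₀ h101
    linarith
  have key : (1 + 1/K) ≤ (1 + 2/K) * ((1 - 1/(100*K)) * (1 - 1/(101*K))) := by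
    set u : ℝ := 1/K with hu
    have hu0 : 0 < u := by positivity
    have hu5 : u ≤ 1/5 := by
      rw [hu, div_le_div_iff₀ (by positivity) (by norm_num)]; linarith
    have e1 : 1/(100*K) = u/100 := by rw [hu]; ring
    have e2 : 1/(101*K) = u/101 := by rw [hu]; ring
    have e3 : 2/K = 2*u := by rw [hu]; ring
    rw [e1, e2, e3]
    nlinarith [sq_nonneg u, mul_pos hu0 hu0, mul_pos (mul_pos hu0 hu0) hu0]
  calc (1 + 1/K) * (1 - 1/(100*K))⁻¹ * (1 - r)⁻¹
      ≤ (1 + 1/K) * (1 - 1/(100*K))⁻¹ * (1 - 1/(101*K))⁻¹ := by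
        apply mul_le_mul_of_nonneg_left hmono
        positivity
    _ = (1 + 1/K) / ((1 - 1/(100*K)) * (1 - 1/(101*K))) := by
        rw [mul_assoc, ← mul_inv, ← div_eq_mul_inv]
    _ ≤ 1 + 2/K := by
        rw [div_le_iff₀ (by positivity)]
        linarith [key]

lemma Lstep1 (k s j : ℕ) (hk : 5 ≤ k) (hs : 101 * k ^ 3 < s) (hj2 : j ≤ k - 2) :
    ∑ c ∈ Icc 1 (k-1-j),
      ((1 + 1/(k:ℝ)) * (1/(100*(k:ℝ)))^(k-(c+j)) / (s:ℝ)^((c+j)-c) *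
        ((Nat.factorial (k-c):ℝ)/(Nat.factorial (k-(c+j)):ℝ))) *
      ((Nat.choose k c : ℝ) * (k:ℝ)^(2*(c+j)-c) / (Nat.factorial ((c+j)-c):ℝ))
    ≤ (1 + 1/(k:ℝ)) * (1/(100*(k:ℝ))) * (1 - 1/(100*(k:ℝ)))⁻¹ *
        ((k:ℝ)^(k+2*j) / ((s:ℝ)^j * (Nat.factorial j : ℝ))) := by
  have hK5 : (5:ℝ) ≤ (k:ℝ) := by exact_mod_cast hk
  have hK0 : (0:ℝ) < (k:ℝ) := by linarith
  have hs0 : 0 < s := lt_of_le_of_lt (Nat.zero_le _) hs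
  have hS0 : (0:ℝ) < (s:ℝ) := by exact_mod_cast hs0
  set K : ℝ := (k:ℝ) with hKdef
  set S : ℝ := (s:ℝ) with hSdef
  set ε : ℝ := 1/(100*K) with hεdef
  have hε0 : 0 < ε := by positivity
  set n : ℕ := k - j with hndef
  have hn2 : 2 ≤ n := by omega
  have hnk : n ≤ k := by omega
  have hidx : k - 1 - j = n - 1 := by omega
  have hQ : (0:ℝ) < 1 - 1/(100*K) := by
    have : 1/(100*K) ≤ 1/500 := by
      rw [div_le_div_iff₀ (by positivity) (by norm_num)]; linarith
    linarith
  set Q : ℝ := (1 - 1/(100*K))⁻¹ with hQdef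
  have hQ0 : 0 < Q := by positivity
  set A : ℝ := (1 + 1/K) * (k.choose j : ℝ) * K^(2*j) / S^j with hAdef
  have hA0 : 0 ≤ A := by positivity
  rw [hidx]
  have hpt : ∀ c ∈ Icc 1 (n-1),
      ((1 + 1/K) * ε^(k-(c+j)) / S^((c+j)-c) *
        ((Nat.factorial (k-c):ℝ)/(Nat.factorial (k-(c+j)):ℝ))) *
      ((Nat.choose k c : ℝ) * K^(2*(c+j)-c) / (Nat.factorial ((c+j)-c):ℝ))
      = A * ((n.choose c : ℝ) * K^c * ε^(n-c)) := by
    intro c hc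
    simp only [mem_Icc] at hc
    have hcj : c + j ≤ k - 1 := by omega
    rw [show (c+j)-c = j from by omega, show k-(c+j) = n-c from by omega,
        show 2*(c+j)-c = c+2*j from by omega]
    have hf := Lfact k c j (by omega)
    rw [show k-(c+j) = n-c from by omega, ← hndef] at hf
    rw [pow_add]
    rw [hAdef]
    linear_combination ((1 + 1/K) * ε^(n-c) / S^j * K^c * K^(2*j)) * hf
  rw [Finset.sum_congr rfl hpt, ← Finset.mul_sum]
  have hL2 := L2 n hn2 (x := ε) (y := K) hε0.le hK0.le
  have hL1 : (ε+K)^n - K^n ≤ (n:ℝ) * ε * (ε+K)^(n-1) := by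
    have h := L1 (n-1) (x := ε+K) (y := K) hK0.le (by linarith)
    rw [show n - 1 + 1 = n from by omega] at h
    have hc1 : ((n-1 : ℕ):ℝ) + 1 = (n:ℝ) := by
      have : ((n-1 : ℕ):ℝ) = (n:ℝ) - 1 := by
        rw [Nat.cast_sub (by omega)]; norm_num
      rw [this]; ring
    rw [hc1] at h
    calc (ε+K)^n - K^n ≤ (n:ℝ) * (ε + K - K) * (ε+K)^(n-1) := h
      _ = (n:ℝ) * ε * (ε+K)^(n-1) := by ring
  have hbnd : (ε+K)^(n-1) ≤ K^(n-1) * Q := by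
    set t : ℝ := ε/K with htdef
    have ht0 : 0 ≤ t := by positivity
    have heK : ε + K = K * (1+t) := by
      rw [htdef]; field_simp; ring
    have hkt : (k:ℝ) * t = 1/(100*K) := by
      rw [htdef, hεdef]; field_simp; ring
    have hkt1 : (k:ℝ) * t < 1 := by
      rw [hkt]; linarith [hQ]
    calc (ε+K)^(n-1) = K^(n-1) * (1+t)^(n-1) := by rw [heK, mul_pow]
      _ ≤ K^(n-1) * (1+t)^k := by
          apply mul_le_mul_of_nonneg_left _ (by positivity)
          exact pow_le_pow_right₀ (by linarith) (by omega)
      _ ≤ K^(n-1) * Q := by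
          apply mul_le_mul_of_nonneg_left _ (by positivity)
          rw [hQdef, ← hkt]
          exact L3 k ht0 hkt1
  have hn_le : (n:ℝ) ≤ K := by rw [hKdef]; exact_mod_cast hnk
  have hchain : ∑ c ∈ Icc 1 (n-1), ((n.choose c : ℝ) * K^c * ε^(n-c))
      ≤ K * ε * (K^(n-1) * Q) := by
    calc ∑ c ∈ Icc 1 (n-1), ((n.choose c : ℝ) * K^c * ε^(n-c))
        ≤ (ε + K)^n - ε^n - K^n := hL2
      _ ≤ (n:ℝ) * ε * (ε+K)^(n-1) := by
          have : (0:ℝ) ≤ ε^n := by positivity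
          linarith [hL1]
      _ ≤ K * ε * (K^(n-1) * Q) := by
          apply mul_le_mul (mul_le_mul_of_nonneg_right hn_le hε0.le) hbnd
            (by positivity) (by positivity)
  calc A * ∑ c ∈ Icc 1 (n-1), ((n.choose c : ℝ) * K^c * ε^(n-c))
      ≤ A * (K * ε * (K^(n-1) * Q)) := mul_le_mul_of_nonneg_left hchain hA0
    _ = (1 + 1/K) * ε * Q * ((k.choose j : ℝ) * (K^(2*j) * (K * K^(n-1))) / S^j) := by
        rw [hAdef]; ring
    _ ≤ (1 + 1/K) * ε * Q * (K^(k+2*j) / (S^j * (Nat.factorial j : ℝ))) := by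
        apply mul_le_mul_of_nonneg_left _ (by positivity)
        have hKn : K * K^(n-1) = K^n := by
          rw [← pow_succ']
          congr 1
          omega
        have hsplit : K ^ (k + 2*j) = K^j * K^(2*j) * K^n := by
          rw [← pow_add, ← pow_add]
          congr 1
          omega
        have hc := Nat.choose_le_pow_div (α := ℝ) j k
        rw [hKn]
        calc (k.choose j : ℝ) * (K^(2*j) * K^n) / S^j
            ≤ (K^j / (Nat.factorial j : ℝ)) * (K^(2*j) * K^n) / S^j := by
              gcongr
          _ = K^j * K^(2*j) * K^n / (S^j * (Nat.factorial j : ℝ)) := by ring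
          _ = K^(k+2*j) / (S^j * (Nat.factorial j : ℝ)) := by rw [hsplit]

theorem stmt7 (k s g : ℕ) (hk : 5 ≤ k) (hs : 101 * k ^ 3 < s) (hg : g ≤ k - 2) :
    ∑ c ∈ Finset.Icc 1 (k - g - 1), ∑ d ∈ Finset.Icc (c + g) (k - 1),
      ((1 + 1 / (k : ℝ)) * (1 / (100 * (k : ℝ))) ^ (k - d) / (s : ℝ) ^ (d - c) *
          ((Nat.factorial (k - c) : ℝ) / (Nat.factorial (k - d) : ℝ))) *
        ((Nat.choose k c : ℝ) * (k : ℝ) ^ (2 * d - c) / (Nat.factorial (d - c) : ℝ)) ≤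
      (1 + 2 / (k : ℝ)) * (k : ℝ) ^ (k + 2 * g) /
        ((s : ℝ) ^ g * (Nat.factorial g : ℝ)) * (1 / (100 * (k : ℝ))) := by
  have hK5 : (5:ℝ) ≤ (k:ℝ) := by exact_mod_cast hk
  have hK0 : (0:ℝ) < (k:ℝ) := by linarith
  have hs0 : 0 < s := lt_of_le_of_lt (Nat.zero_le _) hs
  have hS0 : (0:ℝ) < (s:ℝ) := by exact_mod_cast hs0
  have hsR : 101 * (k:ℝ)^3 < (s:ℝ) := by exact_mod_cast hs
  have hr0 : (0:ℝ) ≤ (k:ℝ)^2/(s:ℝ) := by positivity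
  have hr2 : (k:ℝ)^2/(s:ℝ) ≤ 1/(101*(k:ℝ)) := by
    rw [div_le_div_iff₀ hS0 (by positivity)]
    nlinarith
  have hr1 : (k:ℝ)^2/(s:ℝ) < 1 := by
    apply lt_of_le_of_lt hr2
    rw [div_lt_one (by positivity)]
    linarith
  have hQpos : (0:ℝ) < 1 - 1/(100*(k:ℝ)) := by
    have : 1/(100*(k:ℝ)) ≤ 1/500 := by
      rw [div_le_div_iff₀ (by positivity) (by norm_num)]; linarith
    linarith
  have hC00 : (0:ℝ) ≤ (1 + 1/(k:ℝ)) * (1/(100*(k:ℝ))) * (1 - 1/(100*(k:ℝ)))⁻¹ := by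
    positivity
  have hD0 : (0:ℝ) ≤ (k:ℝ)^(k+2*g) / ((s:ℝ)^g * (Nat.factorial g : ℝ)) := by positivity
  rw [Lreindex k g (fun c d =>
    ((1 + 1 / (k : ℝ)) * (1 / (100 * (k : ℝ))) ^ (k - d) / (s : ℝ) ^ (d - c) *
          ((Nat.factorial (k - c) : ℝ) / (Nat.factorial (k - d) : ℝ))) *
        ((Nat.choose k c : ℝ) * (k : ℝ) ^ (2 * d - c) / (Nat.factorial (d - c) : ℝ)))]
  calc ∑ j ∈ Icc g (k-2), ∑ c ∈ Icc 1 (k-1-j),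
        ((1 + 1 / (k : ℝ)) * (1 / (100 * (k : ℝ))) ^ (k - (c+j)) / (s : ℝ) ^ ((c+j) - c) *
          ((Nat.factorial (k - c) : ℝ) / (Nat.factorial (k - (c+j)) : ℝ))) *
        ((Nat.choose k c : ℝ) * (k : ℝ) ^ (2 * (c+j) - c) / (Nat.factorial ((c+j) - c) : ℝ))
      ≤ ∑ j ∈ Icc g (k-2), (1 + 1/(k:ℝ)) * (1/(100*(k:ℝ))) * (1 - 1/(100*(k:ℝ)))⁻¹ *
          ((k:ℝ)^(k+2*j) / ((s:ℝ)^j * (Nat.factorial j : ℝ))) :=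
        Finset.sum_le_sum (fun j hj => Lstep1 k s j hk hs (mem_Icc.1 hj).2)
    _ ≤ ∑ j ∈ Icc g (k-2), (1 + 1/(k:ℝ)) * (1/(100*(k:ℝ))) * (1 - 1/(100*(k:ℝ)))⁻¹ *
          (((k:ℝ)^(k+2*g) / ((s:ℝ)^g * (Nat.factorial g : ℝ))) * ((k:ℝ)^2/(s:ℝ))^(j-g)) :=
        Finset.sum_le_sum (fun j hj => mul_le_mul_of_nonneg_left
          (Lstep2 k s g j hs0 (by omega) (mem_Icc.1 hj).1) hC00)
    _ = (1 + 1/(k:ℝ)) * (1/(100*(k:ℝ))) * (1 - 1/(100*(k:ℝ)))⁻¹ *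
          (((k:ℝ)^(k+2*g) / ((s:ℝ)^g * (Nat.factorial g : ℝ))) *
            ∑ j ∈ Icc g (k-2), ((k:ℝ)^2/(s:ℝ))^(j-g)) := by
        rw [← Finset.mul_sum, ← Finset.mul_sum]
    _ ≤ (1 + 1/(k:ℝ)) * (1/(100*(k:ℝ))) * (1 - 1/(100*(k:ℝ)))⁻¹ *
          (((k:ℝ)^(k+2*g) / ((s:ℝ)^g * (Nat.factorial g : ℝ))) * (1 - (k:ℝ)^2/(s:ℝ))⁻¹) :=
        mul_le_mul_of_nonneg_left
          (mul_le_mul_of_nonneg_left (Lstep3 g (k-2) hr0 hr1) hD0) hC00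
    _ ≤ (1 + 2 / (k : ℝ)) * (k : ℝ) ^ (k + 2 * g) /
        ((s : ℝ) ^ g * (Nat.factorial g : ℝ)) * (1 / (100 * (k : ℝ))) := by
        have hc := Lconst hK5 hr0 hr2
        have hεD : (0:ℝ) ≤ (1/(100*(k:ℝ))) *
            ((k:ℝ)^(k+2*g) / ((s:ℝ)^g * (Nat.factorial g : ℝ))) := by positivity
        calc (1 + 1/(k:ℝ)) * (1/(100*(k:ℝ))) * (1 - 1/(100*(k:ℝ)))⁻¹ *
              (((k:ℝ)^(k+2*g) / ((s:ℝ)^g * (Nat.factorial g : ℝ))) * (1 - (k:ℝ)^2/(s:ℝ))⁻¹)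
            = ((1 + 1/(k:ℝ)) * (1 - 1/(100*(k:ℝ)))⁻¹ * (1 - (k:ℝ)^2/(s:ℝ))⁻¹) *
              ((1/(100*(k:ℝ))) * ((k:ℝ)^(k+2*g) / ((s:ℝ)^g * (Nat.factorial g : ℝ)))) := by
              ring
          _ ≤ (1 + 2/(k:ℝ)) *
              ((1/(100*(k:ℝ))) * ((k:ℝ)^(k+2*g) / ((s:ℝ)^g * (Nat.factorial g : ℝ)))) :=
              mul_le_mul_of_nonneg_right hc hεD
          _ = (1 + 2 / (k : ℝ)) * (k : ℝ) ^ (k + 2 * g) /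
              ((s : ℝ) ^ g * (Nat.factorial g : ℝ)) * (1 / (100 * (k : ℝ))) := by ring
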